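/- Suppose f : I → I is continuous on an interval I ⊆ ℝ and there exist three distinct points x, y, z ∈ I with f(x) = y, f(y) = z, f(z) = x (a period-3 orbit). Then for every n ∈ ℕ, n ≥ 1, there exists a point of f with minimal period n. -/

import Mathlib

open Set Function

/-- Exact image lemma: on `[p,q]` there is a subinterval whose image under `f` is
exactly `uIcc (f p) (f q)`. -/
lemma exists_icc_image_eq_aux (f : ℝ → ℝ) (p q : ℝ) (hpq : p ≤ q)
    (hf : ContinuousOn f (Set.Icc p q)) :
    ∃ a b, p ≤ a ∧ a ≤ b ∧ b ≤ q ∧ f '' Set.Icc a b = Set.uIcc (f p) (f q) := by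
  classical
  set S : Set ℝ := Set.Icc p q ∩ f ⁻¹' {f p} with hS
  have hSclosed : IsClosed S := hf.preimage_isClosed_of_isClosed isClosed_Icc isClosed_singleton
  have hSne : S.Nonempty := ⟨p, ⟨le_rfl, hpq⟩, rfl⟩
  have hSbdd : BddAbove S := ⟨q, fun x hx => hx.1.2⟩
  set a := sSup S with ha
  have haS : a ∈ S := hSclosed.csSup_mem hSne hSbdd
  have hpa : p ≤ a := haS.1.1
  have haq : a ≤ q := haS.1.2
  have hfa : f a = f p := haS.2
  set T : Set ℝ := Set.Icc a q ∩ f ⁻¹' {f q} with hT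
  have hTclosed : IsClosed T :=
    (hf.mono (Set.Icc_subset_Icc_left hpa)).preimage_isClosed_of_isClosed isClosed_Icc
      isClosed_singleton
  have hTne : T.Nonempty := ⟨q, ⟨haq, le_rfl⟩, rfl⟩
  have hTbdd : BddBelow T := ⟨a, fun x hx => hx.1.1⟩
  set b := sInf T with hb
  have hbT : b ∈ T := hTclosed.csInf_mem hTne hTbdd
  have hab : a ≤ b := hbT.1.1
  have hbq : b ≤ q := hbT.1.2
  have hfb : f b = f q := hbT.2
  have hsub : Set.Icc a b ⊆ Set.Icc p q := Set.Icc_subset_Icc hpa hbq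
  have hcont : ContinuousOn f (Set.Icc a b) := hf.mono hsub
  refine ⟨a, b, hpa, hab, hbq, Set.Subset.antisymm ?_ ?_⟩
  · rintro _ ⟨w, hw, rfl⟩
    by_contra hcon
    have hwne_p : f w ≠ f p := fun h => hcon (h ▸ Set.left_mem_uIcc)
    have hwne_q : f w ≠ f q := fun h => hcon (h ▸ Set.right_mem_uIcc)
    have keyS : ∀ x ∈ Set.Icc w b, f x = f p → False := by
      intro x hx hfx
      have hxS : x ∈ S := ⟨⟨hpa.trans (hw.1.trans hx.1), hx.2.trans hbq⟩, hfx⟩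
      have hxa : x ≤ a := le_csSup hSbdd hxS
      have hxw : x = w := le_antisymm (hxa.trans hw.1) hx.1
      exact hwne_p (hxw ▸ hfx)
    have keyT : ∀ x ∈ Set.Icc a w, f x = f q → False := by
      intro x hx hfx
      have hxT : x ∈ T := ⟨⟨hx.1, (hx.2.trans hw.2).trans hbq⟩, hfx⟩
      have hbx : b ≤ x := csInf_le hTbdd hxT
      have hxw : x = w := le_antisymm hx.2 (hw.2.trans hbx)
      exact hwne_q (hxw ▸ hfx)
    have hconwb : ContinuousOn f (Set.uIcc w b) := by
      rw [Set.uIcc_of_le hw.2]; exact hcont.mono (Set.Icc_subset_Icc hw.1 le_rfl)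
    have hconaw : ContinuousOn f (Set.uIcc a w) := by
      rw [Set.uIcc_of_le hw.1]; exact hcont.mono (Set.Icc_subset_Icc le_rfl hw.2)
    rw [Set.mem_uIcc] at hcon
    push_neg at hcon
    rcases le_total (f p) (f q) with hor | hor
    · rcases lt_or_ge (f w) (f p) with hlow | hhigh
      · -- f w < f p ≤ f q = f b : f hits f p on [w, b]
        have : f p ∈ Set.uIcc (f w) (f b) := by
          rw [Set.mem_uIcc]; left; exact ⟨hlow.le, hfb ▸ hor⟩
        obtain ⟨x, hx, hfx⟩ := intermediate_value_uIcc hconwb this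
        rw [Set.uIcc_of_le hw.2] at hx
        exact keyS x hx hfx
      · -- f q < f w (since not (f p ≤ f w ≤ f q)), f a = f p ≤ f q < f w : hits f q on [a, w]
        have hqw : f q < f w := hcon.1 hhigh
        have : f q ∈ Set.uIcc (f a) (f w) := by
          rw [Set.mem_uIcc]; left; exact ⟨hfa ▸ hor, hqw.le⟩
        obtain ⟨x, hx, hfx⟩ := intermediate_value_uIcc hconaw this
        rw [Set.uIcc_of_le hw.1] at hx
        exact keyT x hx hfx
    · rcases lt_or_ge (f w) (f q) with hlow | hhigh
      · -- f w < f q ≤ f p = f a : hits f q on [a, w]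
        have : f q ∈ Set.uIcc (f a) (f w) := by
          rw [Set.mem_uIcc]; right; exact ⟨hlow.le, hfa ▸ hor⟩
        obtain ⟨x, hx, hfx⟩ := intermediate_value_uIcc hconaw this
        rw [Set.uIcc_of_le hw.1] at hx
        exact keyT x hx hfx
      · -- f p < f w, f b = f q ≤ f p < f w : hits f p on [w, b]
        have hpw : f p < f w := hcon.2 hhigh
        have : f p ∈ Set.uIcc (f w) (f b) := by
          rw [Set.mem_uIcc]; right; exact ⟨hfb ▸ hor, hpw.le⟩
        obtain ⟨x, hx, hfx⟩ := intermediate_value_uIcc hconwb this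
        rw [Set.uIcc_of_le hw.2] at hx
        exact keyS x hx hfx
  · rw [← hfa, ← hfb]
    have h1 : ContinuousOn f (Set.uIcc a b) := by rw [Set.uIcc_of_le hab]; exact hcont
    have := intermediate_value_uIcc h1
    rwa [Set.uIcc_of_le hab] at this
/-- Exact image lemma with prescribed target interval. -/
lemma exists_icc_image_eq (f : ℝ → ℝ) (u v s t : ℝ) (hf : ContinuousOn f (Set.Icc u v))
    (hst : s ≤ t) (p q : ℝ) (hp : p ∈ Set.Icc u v) (hq : q ∈ Set.Icc u v)
    (hfp : f p = s) (hfq : f q = t) :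
    ∃ a b, a ≤ b ∧ Set.Icc a b ⊆ Set.Icc u v ∧ f '' Set.Icc a b = Set.Icc s t := by
  rcases le_total p q with hpq | hqp
  · obtain ⟨a, b, h1, h2, h3, h4⟩ :=
      exists_icc_image_eq_aux f p q hpq (hf.mono (Set.Icc_subset_Icc hp.1 hq.2))
    refine ⟨a, b, h2, Set.Icc_subset_Icc (hp.1.trans h1) (h3.trans hq.2), ?_⟩
    rw [h4, hfp, hfq, Set.uIcc_of_le hst]
  · obtain ⟨a, b, h1, h2, h3, h4⟩ :=
      exists_icc_image_eq_aux f q p hqp (hf.mono (Set.Icc_subset_Icc hq.1 hp.2))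
    refine ⟨a, b, h2, Set.Icc_subset_Icc (hq.1.trans h1) (h3.trans hp.2), ?_⟩
    rw [h4, hfp, hfq, Set.uIcc_of_ge hst]

/-- Itinerary lemma: if consecutive intervals are covered, one finds a subinterval of the
first following the whole itinerary, mapping exactly onto the last. -/
lemma itinerary (I : Set ℝ) (f : ℝ → ℝ) (hf : ContinuousOn f I) (hmaps : Set.MapsTo f I I)
    (lo hi : ℕ → ℝ) (hle : ∀ k, lo k ≤ hi k) (hsub : ∀ k, Set.Icc (lo k) (hi k) ⊆ I)
    (hcov : ∀ k, Set.Icc (lo (k + 1)) (hi (k + 1)) ⊆ f '' Set.Icc (lo k) (hi k)) :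
    ∀ n, ∃ a b, a ≤ b ∧ Set.Icc a b ⊆ Set.Icc (lo 0) (hi 0) ∧
      (∀ k ≤ n, f^[k] '' Set.Icc a b ⊆ Set.Icc (lo k) (hi k)) ∧
      f^[n] '' Set.Icc a b = Set.Icc (lo n) (hi n) := by
  intro n
  induction n with
  | zero =>
    refine ⟨lo 0, hi 0, hle 0, subset_rfl, ?_, by simp⟩
    intro k hk
    interval_cases k
    simp
  | succ n ih =>
    obtain ⟨a, b, hab, hsub0, hks, himg⟩ := ih
    have hIccI : Set.Icc a b ⊆ I := hsub0.trans (hsub 0)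
    have hcontn : ContinuousOn (f^[n + 1]) (Set.Icc a b) :=
      (hf.iterate hmaps (n + 1)).mono hIccI
    -- endpoints of the next interval are hit by f^[n+1] on Icc a b
    have hcov' : Set.Icc (lo (n + 1)) (hi (n + 1)) ⊆ f^[n + 1] '' Set.Icc a b := by
      intro e he
      obtain ⟨e', he', hfe⟩ := hcov n he
      rw [← himg] at he'
      obtain ⟨w, hw, hfw⟩ := he'
      exact ⟨w, hw, by rw [Function.iterate_succ_apply', hfw, hfe]⟩
    obtain ⟨p, hp, hfp⟩ := hcov' ⟨le_rfl, hle (n + 1)⟩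
    obtain ⟨q, hq, hfq⟩ := hcov' ⟨hle (n + 1), le_rfl⟩
    obtain ⟨a', b', hab', hsub', himg'⟩ :=
      exists_icc_image_eq (f^[n + 1]) a b (lo (n + 1)) (hi (n + 1)) hcontn (hle (n + 1))
        p q hp hq hfp hfq
    refine ⟨a', b', hab', hsub'.trans hsub0, ?_, himg'⟩
    intro k hk
    rcases Nat.lt_or_ge k (n + 1) with hk' | hk'
    · exact (Set.image_mono hsub').trans (hks k (Nat.lt_succ_iff.mp hk'))
    · have : k = n + 1 := le_antisymm hk hk'
      subst this
      rw [himg']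

/-- A continuous map on a compact interval covering it has a fixed point. -/
lemma exists_fixed (g : ℝ → ℝ) (a b : ℝ) (hab : a ≤ b) (hg : ContinuousOn g (Set.Icc a b))
    (hcov : Set.Icc a b ⊆ g '' Set.Icc a b) : ∃ w ∈ Set.Icc a b, g w = w := by
  obtain ⟨p, hp, hfp⟩ := hcov ⟨le_rfl, hab⟩
  obtain ⟨q, hq, hfq⟩ := hcov ⟨hab, le_rfl⟩
  have huIcc : Set.uIcc p q ⊆ Set.Icc a b := Set.uIcc_subset_Icc hp hq
  have hcont : ContinuousOn (fun x => g x - x) (Set.uIcc p q) :=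
    ((hg.mono huIcc).sub continuousOn_id)
  have h0 : (0 : ℝ) ∈ Set.uIcc (g p - p) (g q - q) := by
    rw [Set.mem_uIcc]
    left
    constructor
    · rw [hfp]; linarith [hp.1]
    · rw [hfq]; linarith [hq.2]
  obtain ⟨w, hw, hfw⟩ := intermediate_value_uIcc hcont h0
  exact ⟨w, huIcc hw, by linarith [sub_eq_zero.mp hfw]⟩
/-- Core case: a 3-cycle `a → b → c → a` with `a < b < c`. -/
lemma period3_core (I : Set ℝ) (hI : I.OrdConnected) (f : ℝ → ℝ) (hf : ContinuousOn f I)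
    (hmaps : Set.MapsTo f I I) (a b c : ℝ) (ha : a ∈ I) (hc : c ∈ I)
    (hab : a < b) (hbc : b < c) (hfa : f a = b) (hfb : f b = c) (hfc : f c = a) :
    ∀ n : ℕ, 1 ≤ n → ∃ w ∈ I, Function.minimalPeriod f w = n := by
  have hacI : Set.Icc a c ⊆ I := hI.out ha hc
  have hbcI : Set.Icc b c ⊆ I := fun e he => hacI ⟨hab.le.trans he.1, he.2⟩
  have habI : Set.Icc a b ⊆ I := fun e he => hacI ⟨he.1, he.2.trans hbc.le⟩
  -- coverings
  have cov1 : Set.Icc a c ⊆ f '' Set.Icc b c := by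
    have hcont : ContinuousOn f (Set.uIcc b c) := by
      rw [Set.uIcc_of_le hbc.le]; exact hf.mono hbcI
    have := intermediate_value_uIcc hcont
    rw [Set.uIcc_of_le hbc.le, hfb, hfc] at this
    rwa [Set.uIcc_comm, Set.uIcc_of_le (hab.le.trans hbc.le)] at this
  have cov2 : Set.Icc b c ⊆ f '' Set.Icc a b := by
    have hcont : ContinuousOn f (Set.uIcc a b) := by
      rw [Set.uIcc_of_le hab.le]; exact hf.mono habI
    have := intermediate_value_uIcc hcont
    rw [Set.uIcc_of_le hab.le, hfa, hfb, Set.uIcc_of_le hbc.le] at this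
    exact this
  intro n hn
  rcases eq_or_lt_of_le hn with h1 | h2
  · -- n = 1 : fixed point in [b, c]
    obtain ⟨w, hw, hfw⟩ := exists_fixed f b c hbc.le (hf.mono hbcI)
      (fun e he => cov1 ⟨hab.le.trans he.1, he.2⟩)
    exact ⟨w, hbcI hw, by rw [← h1, Function.minimalPeriod_eq_one_iff_isFixedPt]; exact hfw⟩
  -- now n ≥ 2
  have hn2 : 2 ≤ n := h2
  set lo : ℕ → ℝ := fun k => if k % n = n - 1 then a else b with hlo
  set hi : ℕ → ℝ := fun k => if k % n = n - 1 then b else c with hhi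
  have hJ : ∀ k, Set.Icc (lo k) (hi k) = if k % n = n - 1 then Set.Icc a b else Set.Icc b c := by
    intro k; simp only [hlo, hhi]; split_ifs <;> rfl
  have hle : ∀ k, lo k ≤ hi k := by
    intro k; simp only [hlo, hhi]; split_ifs
    exacts [hab.le, hbc.le]
  have hsub : ∀ k, Set.Icc (lo k) (hi k) ⊆ I := by
    intro k; rw [hJ k]; split_ifs
    exacts [habI, hbcI]
  have hcov : ∀ k, Set.Icc (lo (k + 1)) (hi (k + 1)) ⊆ f '' Set.Icc (lo k) (hi k) := by
    intro k
    rw [hJ k, hJ (k + 1)]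
    rcases eq_or_ne (k % n) (n - 1) with h | h
    · have hsucc : (k + 1) % n = 0 := by
        rw [Nat.add_mod, h, Nat.one_mod_eq_one.mpr (by omega)]
        have : n - 1 + 1 = n := by omega
        rw [this, Nat.mod_self]
      rw [if_pos h, if_neg (by omega)]
      exact cov2
    · rw [if_neg h]
      split_ifs
      · exact (fun e he => cov1 ⟨he.1, he.2.trans hbc.le⟩)
      · exact (fun e he => cov1 ⟨hab.le.trans he.1, he.2⟩)
  obtain ⟨a', b', hab', hsub0, hks, himg⟩ := itinerary I f hf hmaps lo hi hle hsub hcov n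
  have h0 : lo 0 = b ∧ hi 0 = c := by
    constructor <;> simp only [hlo, hhi] <;> rw [if_neg (by rw [Nat.zero_mod]; omega)]
  have hnn : lo n = b ∧ hi n = c := by
    constructor <;> simp only [hlo, hhi, Nat.mod_self] <;> rw [if_neg (by omega)]
  rw [h0.1, h0.2] at hsub0
  rw [hnn.1, hnn.2] at himg
  have hsubI : Set.Icc a' b' ⊆ I := hsub0.trans hbcI
  obtain ⟨w, hw, hfw⟩ := exists_fixed (f^[n]) a' b' hab'
    ((hf.iterate hmaps n).mono hsubI) (by rw [himg]; exact hsub0)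
  have hwI : w ∈ I := hsubI hw
  have hper : Function.IsPeriodicPt f n w := hfw
  have hmem : ∀ k ≤ n, f^[k] w ∈ Set.Icc (lo k) (hi k) := fun k hk => hks k hk ⟨w, hw, rfl⟩
  have hmem1 : f^[n - 1] w ∈ Set.Icc a b := by
    have := hmem (n - 1) (by omega)
    rwa [hJ, if_pos (Nat.mod_eq_of_lt (by omega))] at this
  have hmem0 : ∀ k ≤ n - 2, f^[k] w ∈ Set.Icc b c := by
    intro k hk
    have := hmem k (by omega)
    rwa [hJ, if_neg (by rw [Nat.mod_eq_of_lt (by omega)]; omega)] at this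
  refine ⟨w, hwI, ?_⟩
  set m := Function.minimalPeriod f w with hm
  have hmdvd : m ∣ n := hper.minimalPeriod_dvd
  have hmpos : 0 < m := hper.minimalPeriod_pos (by omega)
  by_contra hne
  have hmlt : m < n := lt_of_le_of_ne (Nat.le_of_dvd (by omega) hmdvd) hne
  -- (n-1) % m = m - 1
  have hrval : (n - 1) % m = m - 1 := by
    obtain ⟨k, hk⟩ := hmdvd
    have hk1 : 1 ≤ k := by
      rcases Nat.eq_zero_or_pos k with h | h
      · subst h; omega
      · exact h
    obtain ⟨k', rfl⟩ : ∃ k', k = k' + 1 := ⟨k - 1, by omega⟩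
    have hmul : m * (k' + 1) = m * k' + m := Nat.mul_succ m k'
    have hrw : n - 1 = m * k' + (m - 1) := by omega
    rw [hrw, Nat.mul_add_mod, Nat.mod_eq_of_lt (by omega)]
  have hiter : f^[(n - 1) % m] w = f^[n - 1] w := Function.iterate_mod_minimalPeriod_eq
  have hmem0' : f^[n - 1] w ∈ Set.Icc b c := by
    rw [← hiter, hrval]
    exact hmem0 (m - 1) (by omega)
  have hbval : f^[n - 1] w = b := le_antisymm hmem1.2 hmem0'.1
  have hwc : w = c := by
    have : f^[n] w = f (f^[n - 1] w) := by
      conv_lhs => rw [show n = (n - 1) + 1 by omega]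
      rw [Function.iterate_succ_apply']
    rw [hfw] at this
    rw [this, hbval, hfb]
  rcases eq_or_lt_of_le hn2 with h2' | h3
  · -- n = 2 : then m = 1, w is a fixed point, but w = c and f c = a ≠ c
    have hm1 : m = 1 := by omega
    have : f w = w := by
      have := Function.isPeriodicPt_minimalPeriod f w
      rwa [← hm, hm1] at this
    rw [hwc, hfc] at this
    linarith
  · -- n ≥ 3 : f w ∈ [b, c] but f w = f c = a < b
    have : f^[1] w ∈ Set.Icc b c := hmem0 1 (by omega)
    rw [Function.iterate_one, hwc, hfc] at this
    linarith [this.1]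
/-- Mirror case: a 3-cycle `a → c → b → a` with `a < b < c`, handled by conjugating
with negation. -/
lemma period3_mirror (I : Set ℝ) (hI : I.OrdConnected) (f : ℝ → ℝ) (hf : ContinuousOn f I)
    (hmaps : Set.MapsTo f I I) (a b c : ℝ) (ha : a ∈ I) (_hb : b ∈ I) (hc : c ∈ I)
    (hab : a < b) (hbc : b < c) (hfa : f a = c) (hfc : f c = b) (hfb : f b = a) :
    ∀ n : ℕ, 1 ≤ n → ∃ w ∈ I, Function.minimalPeriod f w = n := by
  set J : Set ℝ := (fun t => -t) ⁻¹' I with hJ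
  set g : ℝ → ℝ := fun t => -f (-t) with hg
  have hJI : ∀ t, t ∈ J ↔ -t ∈ I := fun t => Iff.rfl
  have hJord : J.OrdConnected := by
    constructor
    intro u hu v hv e he
    have : -e ∈ Set.Icc (-v) (-u) := ⟨neg_le_neg he.2, neg_le_neg he.1⟩
    exact hI.out hv hu this
  have hgc : ContinuousOn g J := by
    apply ContinuousOn.neg
    exact hf.comp continuousOn_neg (fun t ht => ht)
  have hgm : Set.MapsTo g J J := by
    intro t ht
    have : f (-t) ∈ I := hmaps ht
    simpa [hg, hJI] using this
  have hiter : ∀ (k : ℕ) (t : ℝ), g^[k] t = -(f^[k] (-t)) := by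
    intro k
    induction k with
    | zero => simp
    | succ k ih =>
      intro t
      rw [Function.iterate_succ_apply, Function.iterate_succ_apply, ih]
      simp [hg]
  have hper : ∀ (k : ℕ) (t : ℝ), Function.IsPeriodicPt g k t ↔ Function.IsPeriodicPt f k (-t) := by
    intro k t
    unfold Function.IsPeriodicPt Function.IsFixedPt
    rw [hiter]
    constructor <;> intro h <;> linarith
  intro n hn
  obtain ⟨w', hw', hmin⟩ := period3_core J hJord g hgc hgm (-c) (-b) (-a)
    (by simpa [hJI] using hc) (by simpa [hJI] using ha)
    (neg_lt_neg hbc) (neg_lt_neg hab)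
    (by simp [hg, hfc]) (by simp [hg, hfb]) (by simp [hg, hfa]) n hn
  refine ⟨-w', hw', ?_⟩
  -- transfer minimal period through the conjugacy
  have h1 : Function.IsPeriodicPt f n (-w') := (hper n w').mp (by rw [← hmin]; exact Function.isPeriodicPt_minimalPeriod g w')
  have hdvd1 : Function.minimalPeriod f (-w') ∣ n := h1.minimalPeriod_dvd
  have h2 : Function.IsPeriodicPt g (Function.minimalPeriod f (-w')) w' :=
    (hper _ w').mpr (Function.isPeriodicPt_minimalPeriod f (-w'))
  have hdvd2 : n ∣ Function.minimalPeriod f (-w') := by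
    rw [← hmin]; exact h2.minimalPeriod_dvd
  exact Nat.dvd_antisymm hdvd1 hdvd2

/-- Period three implies all periods (Li–Yorke / Sharkovskii special case):
if a continuous self-map of an interval `I ⊆ ℝ` has a period-3 orbit, then for every
`n ≥ 1` it has a point of minimal period `n`. -/
theorem period_three_implies_all_periods (I : Set ℝ) (hI : I.OrdConnected)
    (f : ℝ → ℝ) (hf : ContinuousOn f I) (hmaps : Set.MapsTo f I I)
    (x y z : ℝ) (hx : x ∈ I) (hy : y ∈ I) (hz : z ∈ I)
    (hxy : x ≠ y) (hyz : y ≠ z) (hxz : x ≠ z)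
    (h1 : f x = y) (h2 : f y = z) (h3 : f z = x) :
    ∀ n : ℕ, 1 ≤ n → ∃ w ∈ I, Function.minimalPeriod f w = n := by
  rcases hxy.lt_or_gt with hxy' | hxy'
  · rcases hyz.lt_or_gt with hyz' | hyz'
    · -- x < y < z
      exact period3_core I hI f hf hmaps x y z hx hz hxy' hyz' h1 h2 h3
    · rcases hxz.lt_or_gt with hxz' | hxz'
      · -- x < z < y
        exact period3_mirror I hI f hf hmaps x z y hx hz hy hxz' hyz' h1 h2 h3
      · -- z < x < y
        exact period3_core I hI f hf hmaps z x y hz hy hxz' hxy' h3 h1 h2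
  · rcases hyz.lt_or_gt with hyz' | hyz'
    · rcases hxz.lt_or_gt with hxz' | hxz'
      · -- y < x < z
        exact period3_mirror I hI f hf hmaps y x z hy hx hz hxy' hxz' h2 h3 h1
      · -- y < z < x
        exact period3_core I hI f hf hmaps y z x hy hx hyz' hxz' h2 h3 h1
    · -- z < y < x
      exact period3_mirror I hI f hf hmaps z y x hz hy hx hyz' hxy' h3 h1 h2
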